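/- Let M_S ⪰ M_T ≻ 0 be symmetric positive definite matrices and Q a matrix with M_T - Q Qᵀ ⪰ 0. Then det(I - Qᵀ M_S⁻¹ Q) ≥ det(I - Qᵀ M_T⁻¹ Q). -/

import Mathlib

open Matrix

section Helpers

variable {k n m : ℕ}

open scoped MatrixOrder

private lemma star_vec (v : Fin k → ℝ) : star v = v := by
  ext i; simp

private lemma dot_self_pos {v : Fin k → ℝ} (hv : v ≠ 0) : 0 < v ⬝ᵥ v := by
  have := (Matrix.PosDef.one (n := Fin k) (R := ℝ)).dotProduct_mulVec_pos hv
  simpa [_root_.star_vec] using this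

private lemma psd_dot {M : Matrix (Fin k) (Fin k) ℝ} (hM : M.PosSemidef) (x : Fin k → ℝ) :
    0 ≤ x ⬝ᵥ (M *ᵥ x) := by simpa [_root_.star_vec] using hM.dotProduct_mulVec_nonneg x

private lemma sandwich {S : Matrix (Fin k) (Fin k) ℝ} (hSu : IsUnit S.det)
    (M : Matrix (Fin k) (Fin k) ℝ) : S⁻¹ * (S * M * S) * S⁻¹ = M := by
  have h : S⁻¹ * (S * M * S) * S⁻¹ = (S⁻¹ * S) * M * (S * S⁻¹) := by
    simp only [Matrix.mul_assoc]
  rw [h, Matrix.nonsing_inv_mul _ hSu, Matrix.mul_nonsing_inv _ hSu,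
    Matrix.one_mul, Matrix.mul_one]

private lemma sandwich' {S : Matrix (Fin k) (Fin k) ℝ} (hSu : IsUnit S.det)
    (M : Matrix (Fin k) (Fin k) ℝ) : S * (S⁻¹ * M * S⁻¹) * S = M := by
  have h : S * (S⁻¹ * M * S⁻¹) * S = (S * S⁻¹) * M * (S⁻¹ * S) := by
    simp only [Matrix.mul_assoc]
  rw [h, Matrix.nonsing_inv_mul _ hSu, Matrix.mul_nonsing_inv _ hSu,
    Matrix.one_mul, Matrix.mul_one]

private lemma sq_sandwich {S : Matrix (Fin k) (Fin k) ℝ} (hSu : IsUnit S.det) :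
    S⁻¹ * (S * S) * S⁻¹ = 1 := by
  have h := sandwich hSu 1
  rwa [Matrix.mul_one] at h

/-- An invertible symmetric square root of a positive definite real matrix. -/
private lemma exists_sqrt {M : Matrix (Fin k) (Fin k) ℝ} (hM : M.PosDef) :
    ∃ S : Matrix (Fin k) (Fin k) ℝ, S.PosSemidef ∧ S * S = M ∧ IsUnit S.det := by
  refine ⟨CFC.sqrt M, Matrix.nonneg_iff_posSemidef.mp (CFC.sqrt_nonneg M),
    CFC.sqrt_mul_sqrt_self M (Matrix.nonneg_iff_posSemidef.mpr hM.posSemidef), ?_⟩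
  have hdet2 : (CFC.sqrt M).det * (CFC.sqrt M).det = M.det := by
    rw [← det_mul, CFC.sqrt_mul_sqrt_self M (Matrix.nonneg_iff_posSemidef.mpr hM.posSemidef)]
  refine isUnit_iff_ne_zero.mpr fun h => ?_
  rw [h, zero_mul] at hdet2
  exact absurd hdet2.symm (ne_of_gt hM.det_pos)

/-- For PSD `C` with `1 - C` PSD, `det C ≤ 1`. -/
private lemma det_le_one {C : Matrix (Fin k) (Fin k) ℝ} (hC : C.PosSemidef)
    (h1 : ((1 : Matrix (Fin k) (Fin k) ℝ) - C).PosSemidef) : C.det ≤ 1 := by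
  have hH := hC.isHermitian
  rw [hH.det_eq_prod_eigenvalues]
  refine Finset.prod_le_one (fun i _ => by exact_mod_cast hC.eigenvalues_nonneg i)
    (fun i _ => ?_)
  suffices h : hH.eigenvalues i ≤ 1 by exact_mod_cast h
  set v : Fin k → ℝ := ⇑(hH.eigenvectorBasis i) with hv
  have hmul : C *ᵥ v = hH.eigenvalues i • v := hH.mulVec_eigenvectorBasis i
  have hvne : v ≠ 0 := by
    intro h
    have := hH.eigenvectorBasis.orthonormal.1 i
    rw [show (hH.eigenvectorBasis i : EuclideanSpace ℝ (Fin k)) = 0 from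
      by ext j; exact congrFun h j] at this
    simp at this
  have h0 := psd_dot h1 v
  rw [sub_mulVec, one_mulVec, hmul, dotProduct_sub, dotProduct_smul, smul_eq_mul] at h0
  nlinarith [dot_self_pos hvne]

/-- Determinant monotonicity on the Loewner order. -/
private lemma det_mono {A B : Matrix (Fin k) (Fin k) ℝ} (hA : A.PosSemidef)
    (hBA : (B - A).PosSemidef) : A.det ≤ B.det := by
  have hB : B.PosSemidef := by simpa using hBA.add hA
  by_cases hBd : B.PosDef
  · obtain ⟨S, hSps, hSS, hSu⟩ := exists_sqrt hBd
    have hSH : Sᴴ = S := hSps.isHermitian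
    have hSiH : (S⁻¹)ᴴ = S⁻¹ := by rw [conjTranspose_nonsing_inv, hSH]
    obtain ⟨C, hCdef⟩ : ∃ C, C = S⁻¹ * A * S⁻¹ := ⟨_, rfl⟩
    have hC : C.PosSemidef := by
      have := hA.mul_mul_conjTranspose_same S⁻¹
      rwa [hSiH, ← hCdef] at this
    have h1C : ((1 : Matrix (Fin k) (Fin k) ℝ) - C).PosSemidef := by
      have := hBA.mul_mul_conjTranspose_same S⁻¹
      rw [hSiH] at this
      have heq : S⁻¹ * (B - A) * S⁻¹ = 1 - C := by
        rw [Matrix.mul_sub, Matrix.sub_mul, hCdef, ← hSS, sq_sandwich hSu]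
      rwa [heq] at this
    have hAeq : A = S * C * S := by
      rw [hCdef, sandwich' hSu]
    have hdet2 : S.det * S.det = B.det := by rw [← det_mul, hSS]
    calc A.det = C.det * B.det := by
          rw [hAeq, det_mul, det_mul, ← hdet2]; ring
      _ ≤ B.det := mul_le_of_le_one_left (le_of_lt hBd.det_pos) (det_le_one hC h1C)
  · -- B is singular; then A is singular too
    have hBH := hB.isHermitian
    have hex : ∃ x, x ≠ 0 ∧ ¬(0 < star x ⬝ᵥ (B *ᵥ x)) := by
      by_contra hcon
      push_neg at hcon
      exact hBd (Matrix.posDef_iff_dotProduct_mulVec.mpr ⟨hBH, fun x hx => hcon x hx⟩)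
    obtain ⟨x, hx0, hxle⟩ := hex
    rw [not_lt, _root_.star_vec] at hxle
    have hBx0 : x ⬝ᵥ (B *ᵥ x) = 0 := le_antisymm hxle (psd_dot hB x)
    have hAx0 : x ⬝ᵥ (A *ᵥ x) = 0 := by
      have h2 := psd_dot hBA x
      rw [sub_mulVec, dotProduct_sub] at h2
      have h3 := psd_dot hA x
      linarith
    have hBker : B *ᵥ x = 0 := (hB.dotProduct_mulVec_zero_iff x).1 (by rwa [_root_.star_vec])
    have hAker : A *ᵥ x = 0 := (hA.dotProduct_mulVec_zero_iff x).1 (by rwa [_root_.star_vec])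
    have hdB : B.det = 0 := Matrix.exists_mulVec_eq_zero_iff.1 ⟨x, hx0, hBker⟩
    have hdA : A.det = 0 := Matrix.exists_mulVec_eq_zero_iff.1 ⟨x, hx0, hAker⟩
    rw [hdA, hdB]

/-- `1 - A Aᵀ ⪰ 0 → 1 - Aᵀ A ⪰ 0`. -/
private lemma psd_one_sub_transpose_mul {A : Matrix (Fin n) (Fin m) ℝ}
    (h : ((1 : Matrix (Fin n) (Fin n) ℝ) - A * Aᵀ).PosSemidef) :
    ((1 : Matrix (Fin m) (Fin m) ℝ) - Aᵀ * A).PosSemidef := by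
  refine Matrix.posSemidef_iff_dotProduct_mulVec.mpr ⟨?_, ?_⟩
  · have h' : (Aᴴ * A).IsHermitian := Matrix.isHermitian_conjTranspose_mul_self A
    rw [conjTranspose_eq_transpose_of_trivial] at h'
    exact Matrix.isHermitian_one.sub h'
  · intro x
    rw [_root_.star_vec, sub_mulVec, one_mulVec, dotProduct_sub, sub_nonneg]
    set u := A *ᵥ x with hu
    set w := Aᵀ *ᵥ u with hw
    have h1 : x ⬝ᵥ ((Aᵀ * A) *ᵥ x) = u ⬝ᵥ u := by
      rw [← mulVec_mulVec, dotProduct_mulVec, vecMul_transpose, ← hu]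
    have h2 : w ⬝ᵥ x = u ⬝ᵥ u := by
      rw [hw, mulVec_transpose, ← dotProduct_mulVec, ← hu]
    have h3 : w ⬝ᵥ w ≤ u ⬝ᵥ u := by
      have h5 := psd_dot h u
      rw [sub_mulVec, one_mulVec, dotProduct_sub, ← mulVec_mulVec] at h5
      have h4 : u ⬝ᵥ (A *ᵥ (Aᵀ *ᵥ u)) = w ⬝ᵥ w := by
        rw [dotProduct_mulVec, ← mulVec_transpose, ← hw]
      linarith
    have hcs : (w ⬝ᵥ x) ^ 2 ≤ (w ⬝ᵥ w) * (x ⬝ᵥ x) := by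
      simpa [dotProduct, sq] using Finset.sum_mul_sq_le_sq_mul_sq Finset.univ w x
    have hu0 : 0 ≤ u ⬝ᵥ u := Finset.sum_nonneg fun i _ => mul_self_nonneg _
    have hx0 : 0 ≤ x ⬝ᵥ x := Finset.sum_nonneg fun i _ => mul_self_nonneg _
    rw [h1]
    nlinarith [hcs, h3, hu0, hx0, h2]

/-- Loewner anti-monotonicity of the inverse. -/
private lemma inv_sub_inv_psd {MS MT : Matrix (Fin n) (Fin n) ℝ}
    (hMS : MS.PosDef) (hMT : MT.PosDef) (hST : (MS - MT).PosSemidef) :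
    (MT⁻¹ - MS⁻¹).PosSemidef := by
  obtain ⟨S, hSps, hSS, hSu⟩ := exists_sqrt hMT
  have hSH : Sᴴ = S := hSps.isHermitian
  have hSiH : (S⁻¹)ᴴ = S⁻¹ := by rw [conjTranspose_nonsing_inv, hSH]
  obtain ⟨N, hNdef⟩ : ∃ N, N = S⁻¹ * MS * S⁻¹ := ⟨_, rfl⟩
  have hN : N.PosSemidef := by
    have := hMS.posSemidef.mul_mul_conjTranspose_same S⁻¹
    rwa [hSiH, ← hNdef] at this
  have hNu : IsUnit N.det := by
    rw [hNdef, det_mul, det_mul]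
    have hSi : S⁻¹.det ≠ 0 := by
      rw [det_nonsing_inv, Ring.inverse_eq_inv']
      exact inv_ne_zero (isUnit_iff_ne_zero.mp hSu)
    exact isUnit_iff_ne_zero.mpr
      (mul_ne_zero (mul_ne_zero hSi (ne_of_gt hMS.det_pos)) hSi)
  have hNH : Nᴴ = N := hN.isHermitian
  have hNiH : (N⁻¹)ᴴ = N⁻¹ := by rw [conjTranspose_nonsing_inv, hNH]
  -- N - 1 is PSD
  have hN1 : (N - 1).PosSemidef := by
    have := hST.mul_mul_conjTranspose_same S⁻¹
    rw [hSiH] at this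
    have heq : S⁻¹ * (MS - MT) * S⁻¹ = N - 1 := by
      rw [Matrix.mul_sub, Matrix.sub_mul, hNdef, ← hSS, sq_sandwich hSu]
    rwa [heq] at this
  -- N * N - N is PSD
  obtain ⟨T, hTps, hTT⟩ :
      ∃ T : Matrix (Fin n) (Fin n) ℝ, T.PosSemidef ∧ T * T = N :=
    ⟨CFC.sqrt N, Matrix.nonneg_iff_posSemidef.mp (CFC.sqrt_nonneg N),
      CFC.sqrt_mul_sqrt_self N (Matrix.nonneg_iff_posSemidef.mpr hN)⟩
  have hTH : Tᴴ = T := hTps.isHermitian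
  have hNN : (N * N - N).PosSemidef := by
    have := hN1.mul_mul_conjTranspose_same T
    rw [hTH] at this
    have heq : T * (N - 1) * T = N * N - N := by
      rw [Matrix.mul_sub, Matrix.sub_mul, Matrix.mul_one, ← hTT]
      congr 1
      simp only [Matrix.mul_assoc]
    rwa [heq] at this
  -- 1 - N⁻¹ is PSD
  have h1N : ((1 : Matrix (Fin n) (Fin n) ℝ) - N⁻¹).PosSemidef := by
    have := hNN.mul_mul_conjTranspose_same N⁻¹
    rw [hNiH] at this
    have heq : N⁻¹ * (N * N - N) * N⁻¹ = 1 - N⁻¹ := by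
      rw [Matrix.mul_sub, Matrix.sub_mul, sq_sandwich hNu,
        Matrix.nonsing_inv_mul _ hNu, Matrix.one_mul]
    rwa [heq] at this
  -- conjugate back by S⁻¹
  have hfin := h1N.mul_mul_conjTranspose_same S⁻¹
  rw [hSiH] at hfin
  have hNinv : N⁻¹ = S * MS⁻¹ * S := by
    rw [hNdef, Matrix.mul_inv_rev, Matrix.mul_inv_rev,
      Matrix.nonsing_inv_nonsing_inv _ hSu, ← Matrix.mul_assoc]
  have heq : S⁻¹ * ((1 : Matrix (Fin n) (Fin n) ℝ) - N⁻¹) * S⁻¹ = MT⁻¹ - MS⁻¹ := by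
    rw [Matrix.mul_sub, Matrix.sub_mul, Matrix.mul_one, hNinv, sandwich hSu]
    congr 1
    rw [← hSS, Matrix.mul_inv_rev]
  rwa [heq] at hfin

end Helpers

theorem det_one_sub_conj_mono {n m : ℕ}
    (MS MT : Matrix (Fin n) (Fin n) ℝ) (Q : Matrix (Fin n) (Fin m) ℝ)
    (hMS : MS.PosDef) (hMT : MT.PosDef)
    (hST : (MS - MT).PosSemidef)
    (hTQ : (MT - Q * Qᵀ).PosSemidef) :
    ((1 : Matrix (Fin m) (Fin m) ℝ) - Qᵀ * MT⁻¹ * Q).det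
      ≤ ((1 : Matrix (Fin m) (Fin m) ℝ) - Qᵀ * MS⁻¹ * Q).det := by
  obtain ⟨S, hSps, hSS, hSu⟩ := exists_sqrt hMT
  have hSH : Sᴴ = S := hSps.isHermitian
  have hSiH : (S⁻¹)ᴴ = S⁻¹ := by rw [conjTranspose_nonsing_inv, hSH]
  have hSiT : (S⁻¹)ᵀ = S⁻¹ := by
    rw [← conjTranspose_eq_transpose_of_trivial]; exact hSiH
  -- 1 - Qᵀ MT⁻¹ Q is PSD
  have hDT : ((1 : Matrix (Fin m) (Fin m) ℝ) - Qᵀ * MT⁻¹ * Q).PosSemidef := by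
    obtain ⟨A, hAdef⟩ : ∃ A, A = S⁻¹ * Q := ⟨_, rfl⟩
    have hAAT : ((1 : Matrix (Fin n) (Fin n) ℝ) - A * Aᵀ).PosSemidef := by
      have := hTQ.mul_mul_conjTranspose_same S⁻¹
      rw [hSiH] at this
      have heq : S⁻¹ * (MT - Q * Qᵀ) * S⁻¹ = 1 - A * Aᵀ := by
        rw [Matrix.mul_sub, Matrix.sub_mul, ← hSS, sq_sandwich hSu]
        congr 1
        rw [hAdef, transpose_mul, hSiT]
        simp only [Matrix.mul_assoc]
      rwa [heq] at this
    have hres := psd_one_sub_transpose_mul hAAT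
    have heq : Aᵀ * A = Qᵀ * MT⁻¹ * Q := by
      rw [hAdef, transpose_mul, hSiT, ← hSS, Matrix.mul_inv_rev]
      simp only [Matrix.mul_assoc]
    rwa [heq] at hres
  -- the difference is PSD
  have hdiff : (((1 : Matrix (Fin m) (Fin m) ℝ) - Qᵀ * MS⁻¹ * Q)
      - ((1 : Matrix (Fin m) (Fin m) ℝ) - Qᵀ * MT⁻¹ * Q)).PosSemidef := by
    have hinv := inv_sub_inv_psd hMS hMT hST
    have hconj := hinv.conjTranspose_mul_mul_same Q
    rw [show Qᴴ = Qᵀ from conjTranspose_eq_transpose_of_trivial Q] at hconj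
    have heq : Qᵀ * (MT⁻¹ - MS⁻¹) * Q
        = ((1 : Matrix (Fin m) (Fin m) ℝ) - Qᵀ * MS⁻¹ * Q)
          - ((1 : Matrix (Fin m) (Fin m) ℝ) - Qᵀ * MT⁻¹ * Q) := by
      rw [Matrix.mul_sub, Matrix.sub_mul]
      abel
    rwa [heq] at hconj
  exact det_mono hDT hdiff
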